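/- arXiv:2204.00378 — 2 statements merged into one kernel-verified Lean document; each statement's English description precedes it below -/
import Mathlib

section
/- Let B be a 2×2 real symmetric positive definite matrix, β ∈ (0,1), δ₁, δ₂ ≥ 0, and J(B) = (1-β)(I - B⁻¹) + β(B - I), R(B) = δ₁(B - I) + δ₂(B² - B). Then the Frobenius inner product tr(R(B) J(B)) equals (1-β)δ₁ |B^{1/2} - B^{-1/2}|² + βδ₂ |B^{3/2} - B^{1/2}|² + (βδ₁ + (1-β)δ₂) |B - I|², and in particular is nonnegative. -/
noncomputable def frobSq (A : Matrix (Fin 2) (Fin 2) ℝ) : ℝ :=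
  ∑ i : Fin 2, ∑ j : Fin 2, (A i j)^2

noncomputable def Jmap (β : ℝ) (B : Matrix (Fin 2) (Fin 2) ℝ) : Matrix (Fin 2) (Fin 2) ℝ :=
  (1 - β) • (1 - B⁻¹) + β • (B - 1)

noncomputable def Rmap (δ₁ δ₂ : ℝ) (X : Matrix (Fin 2) (Fin 2) ℝ) : Matrix (Fin 2) (Fin 2) ℝ :=
  δ₁ • (X - 1) + δ₂ • (X * X - X)

lemma frobSq_nonneg (A : Matrix (Fin 2) (Fin 2) ℝ) : 0 ≤ frobSq A := by
  unfold frobSq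
  refine Finset.sum_nonneg fun i _ => Finset.sum_nonneg fun j _ => sq_nonneg _

lemma frobSq_eq_trace (A : Matrix (Fin 2) (Fin 2) ℝ) (h : A.IsSymm) :
    frobSq A = (A * A).trace := by
  have h01 : A 1 0 = A 0 1 := h.apply 0 1
  simp [frobSq, Matrix.trace, Matrix.diag, Matrix.mul_apply, Fin.sum_univ_two, h01]
  ring

theorem stmt5 (β δ₁ δ₂ : ℝ) (hβ : β ∈ Set.Ioo (0:ℝ) 1) (hδ₁ : 0 ≤ δ₁) (hδ₂ : 0 ≤ δ₂)
    (B sqrtB : Matrix (Fin 2) (Fin 2) ℝ) (hsymm : B.IsSymm) (hpos : B.PosDef)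
    (hs : sqrtB.IsSymm) (hsp : sqrtB.PosDef) (hsq : sqrtB * sqrtB = B) :
    (Rmap δ₁ δ₂ B * Jmap β B).trace =
      (1 - β) * δ₁ * frobSq (sqrtB - sqrtB⁻¹)
      + β * δ₂ * frobSq (B * sqrtB - sqrtB)
      + (β * δ₁ + (1 - β) * δ₂) * frobSq (B - 1) ∧
    0 ≤ (Rmap δ₁ δ₂ B * Jmap β B).trace := by
  have hBdet : IsUnit B.det := isUnit_iff_ne_zero.2 (ne_of_gt hpos.det_pos)
  have hsdet : IsUnit sqrtB.det := isUnit_iff_ne_zero.2 (ne_of_gt hsp.det_pos)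
  have hBi : B * B⁻¹ = 1 := Matrix.mul_nonsing_inv B hBdet
  have hBi' : B⁻¹ * B = 1 := Matrix.nonsing_inv_mul B hBdet
  have hsi : sqrtB * sqrtB⁻¹ = 1 := Matrix.mul_nonsing_inv sqrtB hsdet
  have hsi' : sqrtB⁻¹ * sqrtB = 1 := Matrix.nonsing_inv_mul sqrtB hsdet
  have hinv : B⁻¹ = sqrtB⁻¹ * sqrtB⁻¹ := by
    rw [← hsq, Matrix.mul_inv_rev]
  -- symmetry facts
  have hsinv : (sqrtB⁻¹).IsSymm := by
    rw [Matrix.IsSymm, Matrix.transpose_nonsing_inv, hs]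
  have hsym1 : (sqrtB - sqrtB⁻¹).IsSymm := hs.sub hsinv
  have hcomm : sqrtB * B = B * sqrtB := by rw [← hsq, mul_assoc]
  have hsym2 : (B * sqrtB - sqrtB).IsSymm := by
    rw [Matrix.IsSymm, Matrix.transpose_sub, Matrix.transpose_mul, hs, hsymm, hcomm]
  have hsym3 : (B - 1).IsSymm := hsymm.sub (Matrix.isSymm_one)
  -- square identities
  have e1 : (sqrtB - sqrtB⁻¹) * (sqrtB - sqrtB⁻¹) = B + B⁻¹ - 2 • (1 : Matrix (Fin 2) (Fin 2) ℝ) := by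
    rw [sub_mul, mul_sub, mul_sub, hsq, hsi, hsi', hinv]
    abel
  have e2 : (B * sqrtB - sqrtB) * (B * sqrtB - sqrtB)
      = B * B * B - 2 • (B * B) + B := by
    rw [sub_mul, mul_sub, mul_sub]
    have a1 : B * sqrtB * (B * sqrtB) = B * B * B := by
      rw [mul_assoc, ← mul_assoc sqrtB, hcomm, mul_assoc, hsq, ← mul_assoc]
    have a2 : B * sqrtB * sqrtB = B * B := by rw [mul_assoc, hsq]
    have a3 : sqrtB * (B * sqrtB) = B * B := by rw [← mul_assoc, hcomm, mul_assoc, hsq]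
    rw [a1, a2, a3, hsq]
    abel
  have e3 : (B - 1) * (B - 1) = B * B - 2 • B + 1 := by
    rw [sub_mul, mul_sub, mul_sub, mul_one, one_mul, one_mul]
    abel
  -- product expansion
  have e4 : (B - 1) * (1 - B⁻¹) = B + B⁻¹ - 2 • (1 : Matrix (Fin 2) (Fin 2) ℝ) := by
    rw [sub_mul, mul_sub, mul_sub, hBi, one_mul, mul_one, one_mul]
    abel
  have e5 : (B * B - B) * (1 - B⁻¹) = B * B - 2 • B + 1 := by
    rw [sub_mul, mul_sub, mul_sub, hBi, mul_one, mul_one, mul_assoc, hBi, mul_one]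
    abel
  have e6 : (B * B - B) * (B - 1) = B * B * B - 2 • (B * B) + B := by
    rw [sub_mul, mul_sub, mul_sub, mul_one, mul_one]
    abel
  have key : Rmap δ₁ δ₂ B * Jmap β B
      = ((1 - β) * δ₁) • (B + B⁻¹ - 2 • (1 : Matrix (Fin 2) (Fin 2) ℝ))
        + (β * δ₂) • (B * B * B - 2 • (B * B) + B)
        + (β * δ₁ + (1 - β) * δ₂) • (B * B - 2 • B + 1) := by
    unfold Rmap Jmap
    simp only [add_mul, mul_add, Matrix.smul_mul, Matrix.mul_smul, e3, e4, e5, e6,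
      smul_smul]
    module
  have hmain : (Rmap δ₁ δ₂ B * Jmap β B).trace =
      (1 - β) * δ₁ * frobSq (sqrtB - sqrtB⁻¹)
      + β * δ₂ * frobSq (B * sqrtB - sqrtB)
      + (β * δ₁ + (1 - β) * δ₂) * frobSq (B - 1) := by
    rw [frobSq_eq_trace _ hsym1, frobSq_eq_trace _ hsym2, frobSq_eq_trace _ hsym3,
      e1, e2, e3, key]
    simp only [Matrix.trace_add, Matrix.trace_smul, Matrix.trace_sub, smul_eq_mul]
  refine ⟨hmain, ?_⟩
  rw [hmain]
  have hb1 : 0 ≤ 1 - β := by linarith [hβ.2]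
  have hb2 : 0 ≤ β := le_of_lt hβ.1
  have := frobSq_nonneg (sqrtB - sqrtB⁻¹)
  have := frobSq_nonneg (B * sqrtB - sqrtB)
  have := frobSq_nonneg (B - 1)
  positivity
end

section
/- For u ∈ H¹(𝕋²) (the 2-torus), the Ladyzhenskaya inequality holds: ‖u‖_{L⁴}² ≤ C ‖u‖_{L²} ‖u‖_{H¹} for an absolute constant C. -/
open MeasureTheory

/-- The fundamental domain of the torus 𝕋² = ℝ²/ℤ². -/
noncomputable def Q : Set (Fin 2 → ℝ) := Set.Icc 0 1

/-- `u` is ℤ²-periodic, i.e. descends to the torus 𝕋². -/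
def TorusPeriodic (u : (Fin 2 → ℝ) → ℝ) : Prop :=
  ∀ (x : Fin 2 → ℝ) (i : Fin 2), u (x + Pi.single i 1) = u x

/-! ### Auxiliary material for the Ladyzhenskaya inequality -/

noncomputable def e₀ : Fin 2 → ℝ := Pi.single 0 1
noncomputable def e₁ : Fin 2 → ℝ := Pi.single 1 1
noncomputable def mk2 (s t : ℝ) : Fin 2 → ℝ := s • e₀ + t • e₁

notation "II" => Set.Icc (0:ℝ) 1

lemma mk2_eval (x : Fin 2 → ℝ) : mk2 (x 0) (x 1) = x := by
  funext i
  fin_cases i <;> simp [mk2, e₀, e₁]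

lemma mk2_add_fst (s t : ℝ) : mk2 (s+1) t = mk2 s t + e₀ := by
  simp [mk2, add_smul]; abel

lemma mk2_add_snd (s t : ℝ) : mk2 s (t+1) = mk2 s t + e₁ := by
  simp [mk2, add_smul]; abel

lemma mk2_cont : Continuous (fun p : ℝ × ℝ => mk2 p.1 p.2) :=
  (continuous_fst.smul continuous_const).add (continuous_snd.smul continuous_const)

lemma mk2_cont_fst (t : ℝ) : Continuous (fun s : ℝ => mk2 s t) :=
  (continuous_id.smul continuous_const).add continuous_const

lemma mk2_cont_snd (s : ℝ) : Continuous (fun t : ℝ => mk2 s t) :=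
  continuous_const.add (continuous_id.smul continuous_const)

lemma norm_e₀ : ‖e₀‖ = 1 := by simp [e₀, Pi.norm_single]
lemma norm_e₁ : ‖e₁‖ = 1 := by simp [e₁, Pi.norm_single]

lemma hasDerivAt_mk2_fst (t s : ℝ) : HasDerivAt (fun s => mk2 s t) e₀ s := by
  have h := ((hasDerivAt_id s).smul_const e₀).add_const (t • e₁)
  simpa [mk2, one_smul] using h

lemma hasDerivAt_mk2_snd (s t : ℝ) : HasDerivAt (fun t => mk2 s t) e₁ t := by
  have h := ((hasDerivAt_id t).smul_const e₁).const_add (s • e₀)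
  simpa [mk2, one_smul] using h

/-- The key 1-dimensional estimate. -/
lemma key1d {g g' : ℝ → ℝ} (hg : ∀ s, HasDerivAt g (g' s) s) (hc : Continuous g')
    (hper : ∀ s, g (s + 1) = g s) {x : ℝ} (hx : x ∈ Set.Icc (0:ℝ) 1) :
    g x ≤ (∫ s in (0:ℝ)..1, g s) + ∫ s in (0:ℝ)..1, |g' s| := by
  have hgc : Continuous g := by
    rw [continuous_iff_continuousAt]; exact fun s => (hg s).continuousAt
  obtain ⟨s₀, hs₀, hmin⟩ := isCompact_Icc.exists_isMinOn (Set.nonempty_Icc.2 zero_le_one)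
    hgc.continuousOn
  have h1 : g s₀ ≤ ∫ s in (0:ℝ)..1, g s := by
    have := intervalIntegral.integral_mono_on (g := g) zero_le_one
      (intervalIntegrable_const (μ := MeasureTheory.volume)) (hgc.intervalIntegrable _ _)
      (fun s hs => hmin hs)
    simpa using this
  have hper' : ∀ s, g' (s + 1) = g' s := by
    intro s
    have h1 : HasDerivAt (fun y => g (y + 1)) (g' (s + 1) * 1) s :=
      (hg (s + 1)).comp s ((hasDerivAt_id s).add_const 1)
    have h2 : HasDerivAt g (g' (s + 1) * 1) s := by
      have he : (fun y => g (y + 1)) = g := funext hper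
      rwa [he] at h1
    simpa using h2.unique (hg s)
  set y := if s₀ ≤ x then x else x + 1 with hy
  have hgy : g y = g x := by
    rw [hy]; split_ifs with h
    · rfl
    · exact hper x
  have hy1 : s₀ ≤ y := by
    rw [hy]; split_ifs with h
    · exact h
    · exact hs₀.2.trans (by linarith [hx.1])
  have hy2 : y ≤ s₀ + 1 := by
    rw [hy]; split_ifs with h
    · exact hx.2.trans (by linarith [hs₀.1])
    · linarith [le_of_not_ge h]
  have hftc : ∫ s in s₀..y, g' s = g y - g s₀ :=
    intervalIntegral.integral_eq_sub_of_hasDerivAt (fun s _ => hg s)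
      (hc.intervalIntegrable _ _)
  have h2 : ∫ s in s₀..y, g' s ≤ ∫ s in s₀..y, |g' s| :=
    intervalIntegral.integral_mono_on hy1 (hc.intervalIntegrable _ _)
      (hc.abs.intervalIntegrable _ _) (fun s _ => le_abs_self _)
  have h3 : ∫ s in s₀..y, |g' s| ≤ ∫ s in s₀..s₀+1, |g' s| := by
    have hadj := intervalIntegral.integral_add_adjacent_intervals
      (hc.abs.intervalIntegrable (μ := MeasureTheory.volume) s₀ y)
      (hc.abs.intervalIntegrable y (s₀+1))
    have hnn : 0 ≤ ∫ s in y..s₀+1, |g' s| :=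
      intervalIntegral.integral_nonneg (μ := MeasureTheory.volume) hy2 (fun s _ => abs_nonneg _)
    linarith
  have h4 : ∫ s in s₀..s₀+1, |g' s| = ∫ s in (0:ℝ)..1, |g' s| := by
    have hp : Function.Periodic (fun s => |g' s|) 1 := fun s => by
      simp only []; rw [hper' s]
    simpa using hp.intervalIntegral_add_eq s₀ 0
  linarith

lemma preQ : (MeasurableEquiv.finTwoArrow (α := ℝ)) ⁻¹' (II ×ˢ II) = Q := by
  ext x
  simp only [Set.mem_preimage, Set.mem_prod, Set.mem_Icc, Q, MeasurableEquiv.finTwoArrow]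
  constructor
  · rintro ⟨⟨h1, h2⟩, h3, h4⟩
    constructor <;> intro i <;> fin_cases i <;> simpa
  · rintro ⟨h1, h2⟩
    exact ⟨⟨h1 0, h2 0⟩, h1 1, h2 1⟩

lemma Qint (f : (Fin 2 → ℝ) → ℝ) :
    ∫ x in Q, f x = ∫ p in II ×ˢ II, f (mk2 p.1 p.2) := by
  have h := (volume_preserving_finTwoArrow ℝ).setIntegral_preimage_emb
    (MeasurableEquiv.measurableEmbedding _) (fun p => f (mk2 p.1 p.2)) (II ×ˢ II)
  rw [preQ] at h
  rw [← h]
  refine setIntegral_congr_fun measurableSet_Icc fun x _ => ?_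
  rw [show ((MeasurableEquiv.finTwoArrow (α := ℝ)) x).1 = x 0 from rfl,
    show ((MeasurableEquiv.finTwoArrow (α := ℝ)) x).2 = x 1 from rfl, mk2_eval]

lemma fub (h : ℝ × ℝ → ℝ) (hc : Continuous h) :
    ∫ p in II ×ˢ II, h p = ∫ x in II, ∫ t in II, h (x, t) := by
  have hint : Integrable h ((volume.restrict II).prod (volume.restrict II)) := by
    rw [Measure.prod_restrict, ← Measure.volume_eq_prod ℝ ℝ, Set.Icc_prod_Icc]
    exact hc.integrableOn_Icc
  rw [Measure.volume_eq_prod ℝ ℝ, ← Measure.prod_restrict]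
  exact integral_prod h hint

lemma fub' (h : ℝ × ℝ → ℝ) (hc : Continuous h) :
    ∫ p in II ×ˢ II, h p = ∫ t in II, ∫ x in II, h (x, t) := by
  rw [fub h hc]
  have hint : Integrable (Function.uncurry (fun x t => h (x, t)))
      ((volume.restrict II).prod (volume.restrict II)) := by
    rw [Measure.prod_restrict, ← Measure.volume_eq_prod ℝ ℝ, Set.Icc_prod_Icc]
    exact hc.integrableOn_Icc
  exact integral_integral_swap hint

lemma fubmul (F G : ℝ → ℝ) :
    ∫ p in II ×ˢ II, F p.1 * G p.2 = (∫ x in II, F x) * ∫ t in II, G t := by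
  rw [Measure.volume_eq_prod ℝ ℝ]
  exact setIntegral_prod_mul F G II II

lemma intIcc (f : ℝ → ℝ) : ∫ s in (0:ℝ)..1, f s = ∫ s in II, f s := by
  rw [intervalIntegral.integral_of_le zero_le_one, integral_Icc_eq_integral_Ioc]

lemma memL2 {f : ℝ × ℝ → ℝ} (hf : Continuous f) :
    MemLp f 2 (volume.restrict (II ×ˢ II)) := by
  rw [memLp_two_iff_integrable_sq hf.aestronglyMeasurable.restrict]
  exact ((hf.pow 2).continuousOn.integrableOn_compact (isCompact_Icc.prod isCompact_Icc))

/-- Cauchy–Schwarz for continuous functions on the unit square. -/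
lemma cs2 {f g : ℝ × ℝ → ℝ} (hf : Continuous f) (hg : Continuous g) :
    ∫ p in II ×ˢ II, |f p * g p| ≤
      Real.sqrt (∫ p in II ×ˢ II, (f p)^2) * Real.sqrt (∫ p in II ×ˢ II, (g p)^2) := by
  have hpq : Real.HolderConjugate 2 2 := Real.HolderConjugate.two_two
  have hf2 : MemLp f (ENNReal.ofReal 2) (volume.restrict (II ×ˢ II)) := by
    rw [show ENNReal.ofReal 2 = 2 by simp]; exact memL2 hf
  have hg2 : MemLp g (ENNReal.ofReal 2) (volume.restrict (II ×ˢ II)) := by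
    rw [show ENNReal.ofReal 2 = 2 by simp]; exact memL2 hg
  have h := integral_mul_norm_le_Lp_mul_Lq hpq hf2 hg2
  have e1 : ∀ (h : ℝ × ℝ → ℝ), (∫ p in II ×ˢ II, ‖h p‖ ^ (2:ℝ)) = ∫ p in II ×ˢ II, (h p)^2 := by
    intro h
    refine integral_congr_ae (Filter.Eventually.of_forall fun p => ?_)
    show ‖h p‖ ^ (2:ℝ) = (h p)^2
    rw [Real.norm_eq_abs, show (2:ℝ) = ((2:ℕ):ℝ) by norm_num, Real.rpow_natCast, sq_abs]
  have e2 : ∀ X : ℝ, 0 ≤ X → X ^ (1/2 : ℝ) = Real.sqrt X := by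
    intro X hX
    rw [Real.sqrt_eq_rpow]
  rw [e1 f, e1 g] at h
  rw [e2 _ (integral_nonneg (fun p => sq_nonneg _)),
    e2 _ (integral_nonneg (fun p => sq_nonneg _))] at h
  calc ∫ p in II ×ˢ II, |f p * g p| = ∫ p in II ×ˢ II, ‖f p‖ * ‖g p‖ := by
        refine integral_congr_ae (Filter.Eventually.of_forall fun p => ?_)
        show |f p * g p| = ‖f p‖ * ‖g p‖
        rw [Real.norm_eq_abs, Real.norm_eq_abs, abs_mul]
    _ ≤ _ := h

theorem stmt13 :
    ∃ C > 0, ∀ u : (Fin 2 → ℝ) → ℝ, ContDiff ℝ 1 u → TorusPeriodic u →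
      Real.sqrt (∫ x in Q, (u x)^4) ≤
        C * Real.sqrt (∫ x in Q, (u x)^2) *
          Real.sqrt ((∫ x in Q, (u x)^2) + ∫ x in Q, ‖fderiv ℝ u x‖^2) := by
  refine ⟨3, by norm_num, fun u hu hper => ?_⟩
  set A := ∫ x in Q, (u x)^2 with hAdef
  set B := ∫ x in Q, ‖fderiv ℝ u x‖^2 with hBdef
  have hcu : Continuous u := hu.continuous
  have hdu : Differentiable ℝ u := hu.differentiable one_ne_zero
  have hd1 : Continuous (fun x => fderiv ℝ u x e₀) :=
    (hu.continuous_fderiv_apply one_ne_zero).comp (continuous_id.prodMk continuous_const)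
  have hd2 : Continuous (fun x => fderiv ℝ u x e₁) :=
    (hu.continuous_fderiv_apply one_ne_zero).comp (continuous_id.prodMk continuous_const)
  have hnd : Continuous (fun x => ‖fderiv ℝ u x‖) := (hu.continuous_fderiv one_ne_zero).norm
  have hQmeas : MeasurableSet Q := by unfold Q; exact measurableSet_Icc
  have hA0 : 0 ≤ A := setIntegral_nonneg hQmeas fun x _ => sq_nonneg _
  have hB0 : 0 ≤ B := setIntegral_nonneg hQmeas fun x _ => sq_nonneg _
  -- derivatives of the slices
  have hderfst : ∀ t s, HasDerivAt (fun s => (u (mk2 s t))^2)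
      (2 * u (mk2 s t) * fderiv ℝ u (mk2 s t) e₀) s := by
    intro t s
    have h1 : HasDerivAt (fun s => u (mk2 s t)) (fderiv ℝ u (mk2 s t) e₀) s :=
      (hdu (mk2 s t)).hasFDerivAt.comp_hasDerivAt s (hasDerivAt_mk2_fst t s)
    have h2 := h1.fun_pow 2
    norm_num at h2
    convert h2 using 1
  have hdersnd : ∀ x t, HasDerivAt (fun t => (u (mk2 x t))^2)
      (2 * u (mk2 x t) * fderiv ℝ u (mk2 x t) e₁) t := by
    intro x t
    have h1 : HasDerivAt (fun t => u (mk2 x t)) (fderiv ℝ u (mk2 x t) e₁) t :=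
      (hdu (mk2 x t)).hasFDerivAt.comp_hasDerivAt t (hasDerivAt_mk2_snd x t)
    have h2 := h1.fun_pow 2
    norm_num at h2
    convert h2 using 1
  -- the two marginal functions
  set F : ℝ → ℝ := fun t => ∫ s in (0:ℝ)..1,
    ((u (mk2 s t))^2 + |2 * u (mk2 s t) * fderiv ℝ u (mk2 s t) e₀|) with hFdef
  set G : ℝ → ℝ := fun x => ∫ t in (0:ℝ)..1,
    ((u (mk2 x t))^2 + |2 * u (mk2 x t) * fderiv ℝ u (mk2 x t) e₁|) with hGdef
  have hum : Continuous fun p : ℝ × ℝ => u (mk2 p.1 p.2) := hcu.comp mk2_cont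
  have hdm1 : Continuous fun p : ℝ × ℝ => fderiv ℝ u (mk2 p.1 p.2) e₀ := hd1.comp mk2_cont
  have hdm2 : Continuous fun p : ℝ × ℝ => fderiv ℝ u (mk2 p.1 p.2) e₁ := hd2.comp mk2_cont
  have hI1 : Continuous (fun p : ℝ × ℝ =>
      (u (mk2 p.1 p.2))^2 + |2 * u (mk2 p.1 p.2) * fderiv ℝ u (mk2 p.1 p.2) e₀|) :=
    (hum.pow 2).add (((continuous_const.mul hum).mul hdm1).abs)
  have hI2 : Continuous (fun p : ℝ × ℝ =>
      (u (mk2 p.1 p.2))^2 + |2 * u (mk2 p.1 p.2) * fderiv ℝ u (mk2 p.1 p.2) e₁|) :=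
    (hum.pow 2).add (((continuous_const.mul hum).mul hdm2).abs)
  have hFc : Continuous F := by
    rw [hFdef]
    apply intervalIntegral.continuous_parametric_intervalIntegral_of_continuous'
      (f := fun t s => (u (mk2 s t))^2 + |2 * u (mk2 s t) * fderiv ℝ u (mk2 s t) e₀|)
    exact hI1.comp continuous_swap
  have hGc : Continuous G := by
    rw [hGdef]
    apply intervalIntegral.continuous_parametric_intervalIntegral_of_continuous'
      (f := fun x t => (u (mk2 x t))^2 + |2 * u (mk2 x t) * fderiv ℝ u (mk2 x t) e₁|)
    exact hI2
  -- pointwise slice bounds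
  have hFpt : ∀ t : ℝ, ∀ x ∈ II, (u (mk2 x t))^2 ≤ F t := by
    intro t x hx
    have hcont : Continuous fun s => 2 * u (mk2 s t) * fderiv ℝ u (mk2 s t) e₀ :=
      (continuous_const.mul (hcu.comp (mk2_cont_fst t))).mul (hd1.comp (mk2_cont_fst t))
    have hperiod : ∀ s, (u (mk2 (s+1) t))^2 = (u (mk2 s t))^2 := by
      intro s
      rw [mk2_add_fst, show (e₀ : Fin 2 → ℝ) = Pi.single 0 1 from rfl, hper]
    have hk := key1d (hderfst t) hcont hperiod hx
    have hsplit : F t = (∫ s in (0:ℝ)..1, (u (mk2 s t))^2)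
        + ∫ s in (0:ℝ)..1, |2 * u (mk2 s t) * fderiv ℝ u (mk2 s t) e₀| := by
      rw [hFdef]
      exact intervalIntegral.integral_add
        (((hcu.comp (mk2_cont_fst t)).pow 2).intervalIntegrable _ _)
        (hcont.abs.intervalIntegrable _ _)
    rw [hsplit]
    exact hk
  have hGpt : ∀ x : ℝ, ∀ t ∈ II, (u (mk2 x t))^2 ≤ G x := by
    intro x t ht
    have hcont : Continuous fun t => 2 * u (mk2 x t) * fderiv ℝ u (mk2 x t) e₁ :=
      (continuous_const.mul (hcu.comp (mk2_cont_snd x))).mul (hd2.comp (mk2_cont_snd x))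
    have hperiod : ∀ t, (u (mk2 x (t+1)))^2 = (u (mk2 x t))^2 := by
      intro t
      rw [mk2_add_snd, show (e₁ : Fin 2 → ℝ) = Pi.single 1 1 from rfl, hper]
    have hk := key1d (hdersnd x) hcont hperiod ht
    have hsplit : G x = (∫ t in (0:ℝ)..1, (u (mk2 x t))^2)
        + ∫ t in (0:ℝ)..1, |2 * u (mk2 x t) * fderiv ℝ u (mk2 x t) e₁| := by
      rw [hGdef]
      exact intervalIntegral.integral_add
        (((hcu.comp (mk2_cont_snd x)).pow 2).intervalIntegrable _ _)
        (hcont.abs.intervalIntegrable _ _)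
    rw [hsplit]
    exact hk
  -- main double-integral estimate
  have hI4 : (∫ x in Q, (u x)^4) ≤ (∫ x in II, G x) * (∫ t in II, F t) := by
    rw [Qint (fun x => (u x)^4), ← fubmul G F]
    apply setIntegral_mono_on
    · exact ((hum.pow 4)).continuousOn.integrableOn_compact (isCompact_Icc.prod isCompact_Icc)
    · exact ((hGc.comp continuous_fst).mul
        (hFc.comp continuous_snd)).continuousOn.integrableOn_compact
        (isCompact_Icc.prod isCompact_Icc)
    · exact measurableSet_Icc.prod measurableSet_Icc
    · rintro ⟨x, t⟩ ⟨hx, ht⟩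
      have h1 := hGpt x t ht
      have h2 := hFpt t x hx
      have he : (u (mk2 x t))^4 = (u (mk2 x t))^2 * (u (mk2 x t))^2 := by ring
      show (u (mk2 x t))^4 ≤ G x * F t
      rw [he]
      exact mul_le_mul h1 h2 (sq_nonneg _) (le_trans (sq_nonneg _) h1)
  -- bounding the marginal integrals
  have hopbound : ∀ (e : Fin 2 → ℝ), ‖e‖ = 1 → ∀ y : Fin 2 → ℝ,
      (fderiv ℝ u y e)^2 ≤ ‖fderiv ℝ u y‖^2 := by
    intro e he y
    have h := (fderiv ℝ u y).le_opNorm e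
    rw [he, mul_one] at h
    have h2 : |fderiv ℝ u y e| ≤ ‖fderiv ℝ u y‖ := by
      rwa [← Real.norm_eq_abs]
    nlinarith [abs_nonneg (fderiv ℝ u y e), sq_abs (fderiv ℝ u y e)]
  have hmarg : ∀ (e : Fin 2 → ℝ), ‖e‖ = 1 →
      ∀ (k : ℝ → ℝ → ℝ), (∀ p : ℝ × ℝ, k p.1 p.2 =
        (u (mk2 p.1 p.2))^2 + |2 * u (mk2 p.1 p.2) * fderiv ℝ u (mk2 p.1 p.2) e|) →
      (∫ p in II ×ˢ II, k p.1 p.2) ≤ A + 2 * Real.sqrt A * Real.sqrt B := by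
    intro e he k hk
    have hde : Continuous (fun x => fderiv ℝ u x e) :=
      (hu.continuous_fderiv_apply one_ne_zero).comp (continuous_id.prodMk continuous_const)
    have hdme : Continuous fun p : ℝ × ℝ => fderiv ℝ u (mk2 p.1 p.2) e := hde.comp mk2_cont
    have hkeq : (∫ p in II ×ˢ II, k p.1 p.2) = (∫ p in II ×ˢ II, (u (mk2 p.1 p.2))^2)
        + ∫ p in II ×ˢ II, |2 * u (mk2 p.1 p.2) * fderiv ℝ u (mk2 p.1 p.2) e| := by
      rw [← integral_add
        ((hum.fun_pow 2).continuousOn.integrableOn_compact (isCompact_Icc.prod isCompact_Icc))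
        ((((continuous_const.fun_mul hum).fun_mul hdme).abs).continuousOn.integrableOn_compact
          (isCompact_Icc.prod isCompact_Icc))]
      exact setIntegral_congr_fun (measurableSet_Icc.prod measurableSet_Icc)
        fun p _ => hk p
    have hAeq : (∫ p in II ×ˢ II, (u (mk2 p.1 p.2))^2) = A := (Qint fun x => (u x)^2).symm
    have habs : (∫ p in II ×ˢ II, |2 * u (mk2 p.1 p.2) * fderiv ℝ u (mk2 p.1 p.2) e|)
        = 2 * ∫ p in II ×ˢ II, |u (mk2 p.1 p.2) * fderiv ℝ u (mk2 p.1 p.2) e| := by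
      rw [← integral_const_mul]
      refine setIntegral_congr_fun (measurableSet_Icc.prod measurableSet_Icc)
        fun p _ => ?_
      rw [mul_assoc, abs_mul]
      norm_num
    have hcs := cs2 (f := fun p : ℝ × ℝ => u (mk2 p.1 p.2))
      (g := fun p : ℝ × ℝ => fderiv ℝ u (mk2 p.1 p.2) e) hum hdme
    have hd2B : (∫ p in II ×ˢ II, (fderiv ℝ u (mk2 p.1 p.2) e)^2) ≤ B := by
      have hBeq : (∫ p in II ×ˢ II, ‖fderiv ℝ u (mk2 p.1 p.2)‖^2) = B :=
        (Qint fun x => ‖fderiv ℝ u x‖^2).symm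
      rw [← hBeq]
      apply setIntegral_mono_on
      · exact (hdme.pow 2).continuousOn.integrableOn_compact (isCompact_Icc.prod isCompact_Icc)
      · exact ((hnd.comp mk2_cont).pow 2).continuousOn.integrableOn_compact
          (isCompact_Icc.prod isCompact_Icc)
      · exact measurableSet_Icc.prod measurableSet_Icc
      · exact fun p _ => hopbound e he _
    have hsq : Real.sqrt (∫ p in II ×ˢ II, (fderiv ℝ u (mk2 p.1 p.2) e)^2) ≤ Real.sqrt B :=
      Real.sqrt_le_sqrt hd2B
    have hsA : Real.sqrt (∫ p in II ×ˢ II, (u (mk2 p.1 p.2))^2) = Real.sqrt A := by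
      rw [hAeq]
    rw [hkeq, hAeq, habs]
    have : (∫ p in II ×ˢ II, |u (mk2 p.1 p.2) * fderiv ℝ u (mk2 p.1 p.2) e|)
        ≤ Real.sqrt A * Real.sqrt B := by
      calc (∫ p in II ×ˢ II, |u (mk2 p.1 p.2) * fderiv ℝ u (mk2 p.1 p.2) e|) ≤ _ := hcs
        _ ≤ Real.sqrt A * Real.sqrt B := by
          rw [hsA] at *
          exact mul_le_mul_of_nonneg_left hsq (Real.sqrt_nonneg A)
    linarith
  have hGbound : (∫ x in II, G x) ≤ A + 2 * Real.sqrt A * Real.sqrt B := by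
    have h1 : (∫ x in II, G x) = ∫ p in II ×ˢ II,
        ((u (mk2 p.1 p.2))^2 + |2 * u (mk2 p.1 p.2) * fderiv ℝ u (mk2 p.1 p.2) e₁|) := by
      rw [fub _ hI2]
      refine setIntegral_congr_fun measurableSet_Icc fun x _ => ?_
      rw [hGdef]
      exact intIcc _
    rw [h1]
    exact hmarg e₁ norm_e₁ (fun x t =>
      (u (mk2 x t))^2 + |2 * u (mk2 x t) * fderiv ℝ u (mk2 x t) e₁|) (fun p => rfl)
  have hFbound : (∫ t in II, F t) ≤ A + 2 * Real.sqrt A * Real.sqrt B := by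
    have h1 : (∫ t in II, F t) = ∫ p in II ×ˢ II,
        ((u (mk2 p.1 p.2))^2 + |2 * u (mk2 p.1 p.2) * fderiv ℝ u (mk2 p.1 p.2) e₀|) := by
      rw [fub' _ hI1]
      refine setIntegral_congr_fun measurableSet_Icc fun t _ => ?_
      rw [hFdef]
      exact intIcc _
    rw [h1]
    exact hmarg e₀ norm_e₀ (fun x t =>
      (u (mk2 x t))^2 + |2 * u (mk2 x t) * fderiv ℝ u (mk2 x t) e₀|) (fun p => rfl)
  have hFnn : 0 ≤ ∫ t in II, F t := by
    refine setIntegral_nonneg measurableSet_Icc fun t _ => ?_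
    rw [hFdef]
    exact intervalIntegral.integral_nonneg zero_le_one fun s _ => by positivity
  -- putting everything together
  have h5 : (∫ x in Q, (u x)^4) ≤ (A + 2 * Real.sqrt A * Real.sqrt B)^2 := by
    have hmul := mul_le_mul hGbound hFbound hFnn (by positivity)
    calc (∫ x in Q, (u x)^4) ≤ _ := hI4
      _ ≤ _ := hmul
      _ = (A + 2 * Real.sqrt A * Real.sqrt B)^2 := by ring
  have h6 : Real.sqrt (∫ x in Q, (u x)^4) ≤ A + 2 * Real.sqrt A * Real.sqrt B := by
    have := Real.sqrt_le_sqrt h5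
    rwa [Real.sqrt_sq (by positivity)] at this
  have h7 : Real.sqrt A ≤ Real.sqrt (A + B) := Real.sqrt_le_sqrt (by linarith)
  have h8 : Real.sqrt B ≤ Real.sqrt (A + B) := Real.sqrt_le_sqrt (by linarith)
  have h9 : A = Real.sqrt A * Real.sqrt A := (Real.mul_self_sqrt hA0).symm
  calc Real.sqrt (∫ x in Q, (u x)^4) ≤ A + 2 * Real.sqrt A * Real.sqrt B := h6
    _ = Real.sqrt A * (Real.sqrt A + 2 * Real.sqrt B) := by linear_combination h9
    _ ≤ Real.sqrt A * (3 * Real.sqrt (A + B)) := by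
        refine mul_le_mul_of_nonneg_left ?_ (Real.sqrt_nonneg A)
        linarith
    _ = 3 * Real.sqrt A * Real.sqrt (A + B) := by ring
end
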